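/- Let E be a finite-dimensional real normed vector space and let Φ : E × E × E → ℝ be a map such that (i) for every e₁ ∈ E, the map (e₂, e₁₂) ↦ Φ(e₁, e₂, e₁₂) is a seminorm on E × E, and (ii) for every e₂ ∈ E, the map (e₁, e₁₂) ↦ Φ(e₁, e₂, e₁₂) is a seminorm on E × E. Then there exists C ≥ 0 such that Φ(e₁, e₂, e₁₂) ≤ C (‖e₁‖ ‖e₂‖ + ‖e₁₂‖) for all e₁, e₂, e₁₂ ∈ E. -/

import Mathlib

open Module

/-- A seminorm on a finite-dimensional real normed space is bounded by the norm. -/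
lemma seminorm_bound_aux {E : Type*} [NormedAddCommGroup E] [NormedSpace ℝ E]
    [FiniteDimensional ℝ E] (p : Seminorm ℝ E) :
    ∃ C : ℝ, 0 ≤ C ∧ ∀ x : E, p x ≤ C * ‖x‖ := by
  classical
  set b := Module.finBasis ℝ E with hb
  set f : Fin (finrank ℝ E) → E →L[ℝ] ℝ :=
    fun i => LinearMap.toContinuousLinearMap (b.coord i) with hf
  refine ⟨∑ i, ‖f i‖ * p (b i), Finset.sum_nonneg fun i _ =>
    mul_nonneg (norm_nonneg _) (apply_nonneg p _), fun x => ?_⟩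
  have hx : x = ∑ i, b.repr x i • b i := (b.sum_repr x).symm
  calc p x = p (∑ i, b.repr x i • b i) := by rw [← hx]
    _ ≤ ∑ i, p (b.repr x i • b i) :=
        Finset.le_sum_of_subadditive p (map_zero p).le (map_add_le_add p) _ _
    _ ≤ ∑ i, ‖f i‖ * p (b i) * ‖x‖ := by
        refine Finset.sum_le_sum fun i _ => ?_
        rw [map_smul_eq_mul]
        have h1 : |b.repr x i| ≤ ‖f i‖ * ‖x‖ := by
          have := (f i).le_opNorm x
          simpa [hf, Real.norm_eq_abs] using this
        calc |b.repr x i| * p (b i) ≤ (‖f i‖ * ‖x‖) * p (b i) :=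
              mul_le_mul_of_nonneg_right h1 (apply_nonneg p _)
          _ = ‖f i‖ * p (b i) * ‖x‖ := by ring
    _ = (∑ i, ‖f i‖ * p (b i)) * ‖x‖ := (Finset.sum_mul _ _ _).symm

/-- Every double seminorm on the flat second-order tangent bundle
`T²ℝᵐ = ℝᵐ × E × E × E` (a map `Φ` that is a seminorm in `(e₂, e₁₂)` for fixed `e₁`,
and a seminorm in `(e₁, e₁₂)` for fixed `e₂`) is dominated by the canonical double
seminorm `(e₁, e₂, e₁₂) ↦ ‖e₁‖‖e₂‖ + ‖e₁₂‖`. -/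
theorem double_seminorm_le_canonical {E : Type*} [NormedAddCommGroup E] [NormedSpace ℝ E]
    [FiniteDimensional ℝ E] (Φ : E → E → E → ℝ)
    (hom₂ : ∀ (e₁ : E) (c : ℝ) (e₂ e₁₂ : E), Φ e₁ (c • e₂) (c • e₁₂) = |c| * Φ e₁ e₂ e₁₂)
    (add₂ : ∀ (e₁ e₂ e₂' e₁₂ e₁₂' : E),
      Φ e₁ (e₂ + e₂') (e₁₂ + e₁₂') ≤ Φ e₁ e₂ e₁₂ + Φ e₁ e₂' e₁₂')
    (hom₁ : ∀ (e₂ : E) (c : ℝ) (e₁ e₁₂ : E), Φ (c • e₁) e₂ (c • e₁₂) = |c| * Φ e₁ e₂ e₁₂)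
    (add₁ : ∀ (e₂ e₁ e₁' e₁₂ e₁₂' : E),
      Φ (e₁ + e₁') e₂ (e₁₂ + e₁₂') ≤ Φ e₁ e₂ e₁₂ + Φ e₁' e₂ e₁₂') :
    ∃ C : ℝ, 0 ≤ C ∧ ∀ (e₁ e₂ e₁₂ : E), Φ e₁ e₂ e₁₂ ≤ C * (‖e₁‖ * ‖e₂‖ + ‖e₁₂‖) := by
  classical
  -- seminorms in (e₂, e₁₂) for fixed e₁
  have P₁def : ∀ e₁ : E, ∃ p : Seminorm ℝ (E × E), ∀ v : E × E, p v = Φ e₁ v.1 v.2 := by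
    intro e₁
    refine ⟨Seminorm.of (fun v => Φ e₁ v.1 v.2) (fun v w => add₂ e₁ v.1 w.1 v.2 w.2)
      (fun c v => ?_), fun v => rfl⟩
    simpa [Real.norm_eq_abs] using hom₂ e₁ c v.1 v.2
  have P₂def : ∀ e₂ : E, ∃ p : Seminorm ℝ (E × E), ∀ v : E × E, p v = Φ v.1 e₂ v.2 := by
    intro e₂
    refine ⟨Seminorm.of (fun v => Φ v.1 e₂ v.2) (fun v w => add₁ e₂ v.1 w.1 v.2 w.2)
      (fun c v => ?_), fun v => rfl⟩
    simpa [Real.norm_eq_abs] using hom₁ e₂ c v.1 v.2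
  -- Φ e₁ 0 0 = 0
  have hzero : ∀ e₁ : E, Φ e₁ 0 0 = 0 := by
    intro e₁
    have := hom₂ e₁ 0 0 0
    simpa using this
  -- Φ 0 0 e₁₂ bound
  obtain ⟨p0, hp0⟩ := P₁def 0
  obtain ⟨C₂, hC₂0, hC₂⟩ := seminorm_bound_aux (p0.comp (LinearMap.inr ℝ E E))
  have hC₂' : ∀ e₁₂ : E, Φ 0 0 e₁₂ ≤ C₂ * ‖e₁₂‖ := by
    intro e₁₂
    have := hC₂ e₁₂
    simpa [Seminorm.comp_apply, hp0] using this
  -- bilinear part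
  set b := Module.finBasis ℝ E with hbdef
  set f : Fin (finrank ℝ E) → E →L[ℝ] ℝ :=
    fun i => LinearMap.toContinuousLinearMap (b.coord i) with hf
  -- for each basis vector, bound e₁ ↦ Φ e₁ (b i) 0
  have hK : ∀ i, ∃ K : ℝ, 0 ≤ K ∧ ∀ e₁ : E, Φ e₁ (b i) 0 ≤ K * ‖e₁‖ := by
    intro i
    obtain ⟨p, hp⟩ := P₂def (b i)
    obtain ⟨K, hK0, hKb⟩ := seminorm_bound_aux (p.comp (LinearMap.inl ℝ E E))
    refine ⟨K, hK0, fun e₁ => ?_⟩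
    have := hKb e₁
    simpa [Seminorm.comp_apply, hp] using this
  choose K hK0 hKb using hK
  set Cb : ℝ := ∑ i, K i * ‖f i‖ with hCb
  have hCb0 : 0 ≤ Cb := Finset.sum_nonneg fun i _ => mul_nonneg (hK0 i) (norm_nonneg _)
  have hbil : ∀ e₁ e₂ : E, Φ e₁ e₂ 0 ≤ Cb * (‖e₁‖ * ‖e₂‖) := by
    intro e₁ e₂
    obtain ⟨p, hp⟩ := P₁def e₁
    have hsum : (e₂, (0 : E)) = ∑ i, b.repr e₂ i • ((b i, (0 : E)) : E × E) := by
      ext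
      · rw [Prod.fst_sum]
        simpa using (b.sum_repr e₂).symm
      · rw [Prod.snd_sum]
        simp
    calc Φ e₁ e₂ 0 = p (e₂, 0) := (hp (e₂, 0)).symm
      _ = p (∑ i, b.repr e₂ i • ((b i, (0:E)) : E × E)) := by rw [← hsum]
      _ ≤ ∑ i, p (b.repr e₂ i • ((b i, (0:E)) : E × E)) :=
          Finset.le_sum_of_subadditive p (map_zero p).le (map_add_le_add p) _ _
      _ ≤ ∑ i, (K i * ‖f i‖) * (‖e₁‖ * ‖e₂‖) := by
          refine Finset.sum_le_sum fun i _ => ?_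
          rw [map_smul_eq_mul, hp]
          have h1 : |b.repr e₂ i| ≤ ‖f i‖ * ‖e₂‖ := by
            have := (f i).le_opNorm e₂
            simpa [hf, Real.norm_eq_abs] using this
          have h2 : Φ e₁ (b i) 0 ≤ K i * ‖e₁‖ := hKb i e₁
          have hnn : (0:ℝ) ≤ Φ e₁ (b i) 0 := by
            rw [← hp (b i, 0)]; exact apply_nonneg p _
          have := mul_le_mul h1 h2 hnn (by positivity)
          calc |b.repr e₂ i| * Φ e₁ (b i) 0 ≤ (‖f i‖ * ‖e₂‖) * (K i * ‖e₁‖) := this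
            _ = (K i * ‖f i‖) * (‖e₁‖ * ‖e₂‖) := by ring
      _ = Cb * (‖e₁‖ * ‖e₂‖) := by rw [hCb, Finset.sum_mul]
  refine ⟨Cb + C₂, by positivity, fun e₁ e₂ e₁₂ => ?_⟩
  have step1 : Φ e₁ e₂ e₁₂ ≤ Φ e₁ e₂ 0 + Φ e₁ 0 e₁₂ := by
    have := add₂ e₁ e₂ 0 0 e₁₂
    simpa using this
  have step2 : Φ e₁ 0 e₁₂ ≤ Φ 0 0 e₁₂ := by
    have := add₁ 0 0 e₁ e₁₂ 0
    simpa [hzero e₁] using this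
  calc Φ e₁ e₂ e₁₂ ≤ Φ e₁ e₂ 0 + Φ e₁ 0 e₁₂ := step1
    _ ≤ Cb * (‖e₁‖ * ‖e₂‖) + C₂ * ‖e₁₂‖ :=
        add_le_add (hbil e₁ e₂) (step2.trans (hC₂' e₁₂))
    _ ≤ (Cb + C₂) * (‖e₁‖ * ‖e₂‖ + ‖e₁₂‖) := by nlinarith [norm_nonneg e₁, norm_nonneg e₂, norm_nonneg e₁₂, mul_nonneg (norm_nonneg e₁) (norm_nonneg e₂)]
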